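/- Let q = (q_0, ..., q_5) ∈ ℤ^6 satisfy the Bazaikin freeness condition and the positive curvature condition, and suppose |σ_3(q)| = 40 (i.e. the order s with 8s = |σ_3(q)| equals 5). Then q is, up to reordering the entries and an overall sign change, equal to (−5, 1, 1, 1, 1, 1). (Geometrically: among positively curved Bazaikin spaces, s = 5 occurs only for the Berger space SU(5)/Sp(2)·S^1.) -/
import Mathlib

/-- The `k`-th elementary symmetric polynomial of the tuple `q`. -/
def esymm {n : ℕ} (k : ℕ) (q : Fin n → ℤ) : ℤ :=
  ∑ t ∈ Finset.univ.powersetCard k, ∏ i ∈ t, q i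

/-- The Bazaikin freeness condition: the entries sum to zero, all entries are odd,
and `gcd (q a + q b, q c + q d) = 2` for all pairwise distinct indices `a b c d`. -/
def BazaikinFree (q : Fin 6 → ℤ) : Prop :=
  (∑ i, q i) = 0 ∧ (∀ i, Odd (q i)) ∧
    ∀ a b c d : Fin 6, a ≠ b → a ≠ c → a ≠ d → b ≠ c → b ≠ d → c ≠ d →
      Int.gcd (q a + q b) (q c + q d) = 2

/-- The positive curvature condition: there is an index `i₀` such that
`q i + q j > 0` for all pairs `i < j` avoiding `i₀`, or `q i + q j < 0` for all such pairs. -/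
def PosCurv (q : Fin 6 → ℤ) : Prop :=
  ∃ i₀ : Fin 6,
    (∀ i j : Fin 6, i < j → i ≠ i₀ → j ≠ i₀ → 0 < q i + q j) ∨
    (∀ i j : Fin 6, i < j → i ≠ i₀ → j ≠ i₀ → q i + q j < 0)


private lemma prodle (x y u v : ℤ) (hu : 0 ≤ u) (hv : 0 ≤ v) (hx : u ≤ x) (hy : v ≤ y) :
    u * v ≤ x * y := mul_le_mul hx hy hv (le_trans hu hx)

private lemma terms (a b c d e : ℤ) (hb : 1 ≤ b) (hc : 1 ≤ c) (hd : 1 ≤ d) (he : 1 ≤ e)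
    (hab : 2 ≤ a + b) (hac : 2 ≤ a + c) (had : 2 ≤ a + d) (hae : 2 ≤ a + e) :
    24 ≤ 3*(a+b)*((b+c)*(a+c)) ∧ 36 ≤ 3*((a+b)+c)*(d*((a+b)+(c+d)))
      ∧ 12*(e*(4+e)) ≤ 3*((a+b)+(c+d))*(e*((a+b+c+d)+e)) := by
  refine ⟨?_, ?_, ?_⟩
  · have h1 : (2:ℤ)*2 ≤ (b+c)*(a+c) := prodle _ _ _ _ (by norm_num) (by norm_num) (by linarith) hac
    have h2 : (2:ℤ)*(2*2) ≤ (a+b)*((b+c)*(a+c)) := prodle _ _ _ _ (by norm_num) (by norm_num) hab h1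
    linarith
  · have h1 : (1:ℤ)*4 ≤ d*((a+b)+(c+d)) := prodle _ _ _ _ (by norm_num) (by norm_num) hd (by linarith)
    have h2 : (3:ℤ)*(1*4) ≤ ((a+b)+c)*(d*((a+b)+(c+d))) :=
      prodle _ _ _ _ (by norm_num) (by norm_num) (by linarith) h1
    linarith
  · have h1 : e*(4+e) ≤ e*((a+b+c+d)+e) :=
      mul_le_mul_of_nonneg_left (by linarith) (by linarith)
    have h2 : 4*(e*(4+e)) ≤ ((a+b)+(c+d))*(e*((a+b+c+d)+e)) :=
      prodle _ _ _ _ (by norm_num) (by nlinarith) (by linarith) h1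
    linarith

private lemma keyge (a b c d e : ℤ) (hb : 1 ≤ b) (hc : 1 ≤ c) (hd : 1 ≤ d) (he : 1 ≤ e)
    (hab : 2 ≤ a + b) (hac : 2 ≤ a + c) (had : 2 ≤ a + d) (hae : 2 ≤ a + e) :
    120 ≤ (a+b+c+d+e)^3 - a^3 - b^3 - c^3 - d^3 - e^3 := by
  obtain ⟨h1, h2, h3⟩ := terms a b c d e hb hc hd he hab hac had hae
  have hiden : (a+b+c+d+e)^3 - a^3 - b^3 - c^3 - d^3 - e^3
      = 3*(a+b)*((b+c)*(a+c)) + 3*((a+b)+c)*(d*((a+b)+(c+d)))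
        + 3*((a+b)+(c+d))*(e*((a+b+c+d)+e)) := by ring
  nlinarith [h1, h2, h3]

private lemma key0 (a b c d e : ℤ) (hb : 1 ≤ b) (hc : 1 ≤ c) (hd : 1 ≤ d) (he : 1 ≤ e)
    (hab : 2 ≤ a + b) (hac : 2 ≤ a + c) (had : 2 ≤ a + d) (hae : 2 ≤ a + e)
    (hx : (a+b+c+d+e)^3 - a^3 - b^3 - c^3 - d^3 - e^3 = 120) : e = 1 := by
  obtain ⟨h1, h2, h3⟩ := terms a b c d e hb hc hd he hab hac had hae
  have hiden : (a+b+c+d+e)^3 - a^3 - b^3 - c^3 - d^3 - e^3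
      = 3*(a+b)*((b+c)*(a+c)) + 3*((a+b)+c)*(d*((a+b)+(c+d)))
        + 3*((a+b)+(c+d))*(e*((a+b+c+d)+e)) := by ring
  have h5 : e*(4+e) ≤ 5 := by linarith
  have h6 : e ≤ 1 := by nlinarith [h5]
  linarith

private lemma key1 (a b c d e : ℤ) (hb : 1 ≤ b) (hc : 1 ≤ c) (hd : 1 ≤ d) (he : 1 ≤ e)
    (hab : 2 ≤ a + b) (hac : 2 ≤ a + c) (had : 2 ≤ a + d) (hae : 2 ≤ a + e)
    (hcube : |(a+b+c+d+e)^3 - a^3 - b^3 - c^3 - d^3 - e^3| = 120) :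
    a = 1 ∧ b = 1 ∧ c = 1 ∧ d = 1 ∧ e = 1 := by
  have hge := keyge a b c d e hb hc hd he hab hac had hae
  rcases (abs_eq (by norm_num : (0:ℤ) ≤ 120)).mp hcube with hx | hx
  · have he1 : e = 1 := key0 a b c d e hb hc hd he hab hac had hae hx
    have hd1 : d = 1 := key0 a b c e d hb hc he hd hab hac hae had (by linear_combination hx)
    have hc1 : c = 1 := key0 a b d e c hb hd he hc hab had hae hac (by linear_combination hx)
    have hb1 : b = 1 := key0 a c d e b hc hd he hb hac had hae hab (by linear_combination hx)
    subst hb1 hc1 hd1 he1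
    have h12 : 12 * ((a - 1) * (a + 5)) = 0 := by linear_combination hx
    have h0 : (a - 1) * (a + 5) = 0 := by linarith
    rcases mul_eq_zero.mp h0 with h | h
    · exact ⟨by linarith, rfl, rfl, rfl, rfl⟩
    · linarith
  · linarith

private lemma key2 (a b c d e : ℤ)
    (hab : 2 ≤ a + b) (hac : 2 ≤ a + c) (had : 2 ≤ a + d) (hae : 2 ≤ a + e)
    (hbc : 2 ≤ b + c) (hbd : 2 ≤ b + d) (hbe : 2 ≤ b + e)
    (hcd : 2 ≤ c + d) (hce : 2 ≤ c + e) (hde : 2 ≤ d + e)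
    (hcube : |(a+b+c+d+e)^3 - a^3 - b^3 - c^3 - d^3 - e^3| = 120) :
    a = 1 ∧ b = 1 ∧ c = 1 ∧ d = 1 ∧ e = 1 := by
  rcases le_or_gt a 0 with ha | ha
  · exact key1 a b c d e (by linarith) (by linarith) (by linarith) (by linarith)
      hab hac had hae hcube
  rcases le_or_gt b 0 with hbneg | hbpos
  · obtain ⟨h1, h2, h3, h4, h5⟩ := key1 b a c d e (by linarith) (by linarith) (by linarith)
      (by linarith) (by linarith) hbc hbd hbe
      (by rw [show (b+a+c+d+e)^3 - b^3 - a^3 - c^3 - d^3 - e^3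
            = (a+b+c+d+e)^3 - a^3 - b^3 - c^3 - d^3 - e^3 from by ring]; exact hcube)
    exact ⟨h2, h1, h3, h4, h5⟩
  rcases le_or_gt c 0 with hcneg | hcpos
  · obtain ⟨h1, h2, h3, h4, h5⟩ := key1 c a b d e (by linarith) (by linarith) (by linarith)
      (by linarith) (by linarith) (by linarith) hcd hce
      (by rw [show (c+a+b+d+e)^3 - c^3 - a^3 - b^3 - d^3 - e^3
            = (a+b+c+d+e)^3 - a^3 - b^3 - c^3 - d^3 - e^3 from by ring]; exact hcube)
    exact ⟨h2, h3, h1, h4, h5⟩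
  rcases le_or_gt d 0 with hdneg | hdpos
  · obtain ⟨h1, h2, h3, h4, h5⟩ := key1 d a b c e (by linarith) (by linarith) (by linarith)
      (by linarith) (by linarith) (by linarith) (by linarith) hde
      (by rw [show (d+a+b+c+e)^3 - d^3 - a^3 - b^3 - c^3 - e^3
            = (a+b+c+d+e)^3 - a^3 - b^3 - c^3 - d^3 - e^3 from by ring]; exact hcube)
    exact ⟨h2, h3, h4, h1, h5⟩
  rcases le_or_gt e 0 with heneg | hepos
  · obtain ⟨h1, h2, h3, h4, h5⟩ := key1 e a b c d (by linarith) (by linarith) (by linarith)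
      (by linarith) (by linarith) (by linarith) (by linarith) (by linarith)
      (by rw [show (e+a+b+c+d)^3 - e^3 - a^3 - b^3 - c^3 - d^3
            = (a+b+c+d+e)^3 - a^3 - b^3 - c^3 - d^3 - e^3 from by ring]; exact hcube)
    exact ⟨h2, h3, h4, h5, h1⟩
  exact key1 a b c d e hbpos hcpos hdpos hepos hab hac had hae hcube

private lemma block (a b c d e x : ℤ)
    (hoa : Odd a) (hob : Odd b) (hoc : Odd c) (hod : Odd d) (hoe : Odd e)
    (pab : 0 < a + b) (pac : 0 < a + c) (pad : 0 < a + d) (pae : 0 < a + e)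
    (pbc : 0 < b + c) (pbd : 0 < b + d) (pbe : 0 < b + e)
    (pcd : 0 < c + d) (pce : 0 < c + e) (pde : 0 < d + e)
    (hsum : a + b + c + d + e + x = 0)
    (habs : |(a+b+c+d+e)^3 - a^3 - b^3 - c^3 - d^3 - e^3| = 120) :
    a = 1 ∧ b = 1 ∧ c = 1 ∧ d = 1 ∧ e = 1 ∧ x = -5 := by
  have two_le : ∀ u v : ℤ, Odd u → Odd v → 0 < u + v → 2 ≤ u + v := by
    rintro u v ⟨m, rfl⟩ ⟨n, rfl⟩ h; omega
  obtain ⟨h1, h2, h3, h4, h5⟩ := key2 a b c d e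
    (two_le _ _ hoa hob pab) (two_le _ _ hoa hoc pac) (two_le _ _ hoa hod pad)
    (two_le _ _ hoa hoe pae) (two_le _ _ hob hoc pbc) (two_le _ _ hob hod pbd)
    (two_le _ _ hob hoe pbe) (two_le _ _ hoc hod pcd) (two_le _ _ hoc hoe pce)
    (two_le _ _ hod hoe pde) habs
  refine ⟨h1, h2, h3, h4, h5, ?_⟩
  rw [h1, h2, h3, h4, h5] at hsum; linarith

private lemma master (q : Fin 6 → ℤ) (i₀ : Fin 6) (ε : ℤ) (hε : ε = 1 ∨ ε = -1)
    (h1 : ∀ j, j ≠ i₀ → ε * q j = 1) (h2 : ε * q i₀ = -5) :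
    ∃ (σ : Equiv.Perm (Fin 6)) (ε' : ℤ), (ε' = 1 ∨ ε' = -1) ∧
      ∀ i : Fin 6, ε' * q (σ i) = (![-5, 1, 1, 1, 1, 1] : Fin 6 → ℤ) i := by
  refine ⟨Equiv.swap 0 i₀, ε, hε, fun i => ?_⟩
  by_cases hi : i = 0
  · subst hi; rw [Equiv.swap_apply_left]; simpa using h2
  · have hσ : Equiv.swap 0 i₀ i ≠ i₀ := by
      intro hcon
      exact hi ((Equiv.swap 0 i₀).injective (by rw [hcon, Equiv.swap_apply_left]))
    rw [h1 _ hσ]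
    fin_cases i
    · exact absurd rfl hi
    all_goals rfl

private lemma hE_lem (q : Fin 6 → ℤ) : esymm 3 q =
    q 0*q 1*q 2 + q 0*q 1*q 3 + q 0*q 1*q 4 + q 0*q 1*q 5 + q 0*q 2*q 3 + q 0*q 2*q 4
  + q 0*q 2*q 5 + q 0*q 3*q 4 + q 0*q 3*q 5 + q 0*q 4*q 5 + q 1*q 2*q 3 + q 1*q 2*q 4
  + q 1*q 2*q 5 + q 1*q 3*q 4 + q 1*q 3*q 5 + q 1*q 4*q 5 + q 2*q 3*q 4 + q 2*q 3*q 5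
  + q 2*q 4*q 5 + q 3*q 4*q 5 := by
  show Finset.sum _ _ = _
  rw [show (Finset.univ.powersetCard 3 : Finset (Finset (Fin 6))) =
    {{0,1,2},{0,1,3},{0,1,4},{0,1,5},{0,2,3},{0,2,4},{0,2,5},{0,3,4},{0,3,5},{0,4,5},
     {1,2,3},{1,2,4},{1,2,5},{1,3,4},{1,3,5},{1,4,5},{2,3,4},{2,3,5},{2,4,5},{3,4,5}} from by decide]
  simp (config := { decide := true }) [Finset.sum_insert, Finset.prod_insert, Finset.mem_insert]
  ring

private lemma hp3_lem (q : Fin 6 → ℤ) (hsum : q 0 + q 1 + q 2 + q 3 + q 4 + q 5 = 0) :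
    (q 0)^3 + (q 1)^3 + (q 2)^3 + (q 3)^3 + (q 4)^3 + (q 5)^3 = 3 * esymm 3 q := by
  rw [hE_lem q]
  linear_combination ((q 0 + q 1 + q 2 + q 3 + q 4 + q 5)^2
    - 3*(q 0*q 1 + q 0*q 2 + q 0*q 3 + q 0*q 4 + q 0*q 5 + q 1*q 2 + q 1*q 3 + q 1*q 4
        + q 1*q 5 + q 2*q 3 + q 2*q 4 + q 2*q 5 + q 3*q 4 + q 3*q 5 + q 4*q 5)) * hsum

set_option maxHeartbeats 1000000 in
theorem posCurved_order_five_is_Berger (q : Fin 6 → ℤ) (h : BazaikinFree q)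
    (hpos : PosCurv q) (hs : |esymm 3 q| = 40) :
    ∃ (σ : Equiv.Perm (Fin 6)) (ε : ℤ), (ε = 1 ∨ ε = -1) ∧
      ∀ i : Fin 6, ε * q (σ i) = (![-5, 1, 1, 1, 1, 1] : Fin 6 → ℤ) i := by
  obtain ⟨hsum, hodd, -⟩ := h
  rw [Fin.sum_univ_six] at hsum
  have hp3 := hp3_lem q hsum
  obtain ⟨i₀, hpp | hpp⟩ := hpos <;> fin_cases i₀
  · -- i₀ = 0, pos
    have hA : (q 1 + q 2 + q 3 + q 4 + q 5)^3 - q 1^3 - q 2^3 - q 3^3 - q 4^3 - q 5^3 = -3 * esymm 3 q := by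
      linear_combination (-1) * hp3 + ((q 1 + q 2 + q 3 + q 4 + q 5)^2 - (q 1 + q 2 + q 3 + q 4 + q 5) * q 0 + (q 0)^2) * hsum
    have habs : |(q 1 + q 2 + q 3 + q 4 + q 5)^3 - q 1^3 - q 2^3 - q 3^3 - q 4^3 - q 5^3| = 120 := by rw [hA, abs_mul, hs]; norm_num
    obtain ⟨h1, h2, h3, h4, h5, h6⟩ := block (q 1) (q 2) (q 3) (q 4) (q 5) (q 0)
      (hodd 1) (hodd 2) (hodd 3) (hodd 4) (hodd 5)
      (hpp 1 2 (by decide) (by decide) (by decide)) (hpp 1 3 (by decide) (by decide) (by decide)) (hpp 1 4 (by decide) (by decide) (by decide)) (hpp 1 5 (by decide) (by decide) (by decide)) (hpp 2 3 (by decide) (by decide) (by decide))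
      (hpp 2 4 (by decide) (by decide) (by decide)) (hpp 2 5 (by decide) (by decide) (by decide)) (hpp 3 4 (by decide) (by decide) (by decide)) (hpp 3 5 (by decide) (by decide) (by decide)) (hpp 4 5 (by decide) (by decide) (by decide))
      (by linarith) habs
    exact master q 0 1 (Or.inl rfl) (by intro j hj; fin_cases j <;> simp_all <;> linarith) (by simp_all <;> linarith)
  · -- i₀ = 1, pos
    have hA : (q 0 + q 2 + q 3 + q 4 + q 5)^3 - q 0^3 - q 2^3 - q 3^3 - q 4^3 - q 5^3 = -3 * esymm 3 q := by
      linear_combination (-1) * hp3 + ((q 0 + q 2 + q 3 + q 4 + q 5)^2 - (q 0 + q 2 + q 3 + q 4 + q 5) * q 1 + (q 1)^2) * hsum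
    have habs : |(q 0 + q 2 + q 3 + q 4 + q 5)^3 - q 0^3 - q 2^3 - q 3^3 - q 4^3 - q 5^3| = 120 := by rw [hA, abs_mul, hs]; norm_num
    obtain ⟨h1, h2, h3, h4, h5, h6⟩ := block (q 0) (q 2) (q 3) (q 4) (q 5) (q 1)
      (hodd 0) (hodd 2) (hodd 3) (hodd 4) (hodd 5)
      (hpp 0 2 (by decide) (by decide) (by decide)) (hpp 0 3 (by decide) (by decide) (by decide)) (hpp 0 4 (by decide) (by decide) (by decide)) (hpp 0 5 (by decide) (by decide) (by decide)) (hpp 2 3 (by decide) (by decide) (by decide))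
      (hpp 2 4 (by decide) (by decide) (by decide)) (hpp 2 5 (by decide) (by decide) (by decide)) (hpp 3 4 (by decide) (by decide) (by decide)) (hpp 3 5 (by decide) (by decide) (by decide)) (hpp 4 5 (by decide) (by decide) (by decide))
      (by linarith) habs
    exact master q 1 1 (Or.inl rfl) (by intro j hj; fin_cases j <;> simp_all <;> linarith) (by simp_all <;> linarith)
  · -- i₀ = 2, pos
    have hA : (q 0 + q 1 + q 3 + q 4 + q 5)^3 - q 0^3 - q 1^3 - q 3^3 - q 4^3 - q 5^3 = -3 * esymm 3 q := by
      linear_combination (-1) * hp3 + ((q 0 + q 1 + q 3 + q 4 + q 5)^2 - (q 0 + q 1 + q 3 + q 4 + q 5) * q 2 + (q 2)^2) * hsum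
    have habs : |(q 0 + q 1 + q 3 + q 4 + q 5)^3 - q 0^3 - q 1^3 - q 3^3 - q 4^3 - q 5^3| = 120 := by rw [hA, abs_mul, hs]; norm_num
    obtain ⟨h1, h2, h3, h4, h5, h6⟩ := block (q 0) (q 1) (q 3) (q 4) (q 5) (q 2)
      (hodd 0) (hodd 1) (hodd 3) (hodd 4) (hodd 5)
      (hpp 0 1 (by decide) (by decide) (by decide)) (hpp 0 3 (by decide) (by decide) (by decide)) (hpp 0 4 (by decide) (by decide) (by decide)) (hpp 0 5 (by decide) (by decide) (by decide)) (hpp 1 3 (by decide) (by decide) (by decide))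
      (hpp 1 4 (by decide) (by decide) (by decide)) (hpp 1 5 (by decide) (by decide) (by decide)) (hpp 3 4 (by decide) (by decide) (by decide)) (hpp 3 5 (by decide) (by decide) (by decide)) (hpp 4 5 (by decide) (by decide) (by decide))
      (by linarith) habs
    exact master q 2 1 (Or.inl rfl) (by intro j hj; fin_cases j <;> simp_all <;> linarith) (by simp_all <;> linarith)
  · -- i₀ = 3, pos
    have hA : (q 0 + q 1 + q 2 + q 4 + q 5)^3 - q 0^3 - q 1^3 - q 2^3 - q 4^3 - q 5^3 = -3 * esymm 3 q := by
      linear_combination (-1) * hp3 + ((q 0 + q 1 + q 2 + q 4 + q 5)^2 - (q 0 + q 1 + q 2 + q 4 + q 5) * q 3 + (q 3)^2) * hsum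
    have habs : |(q 0 + q 1 + q 2 + q 4 + q 5)^3 - q 0^3 - q 1^3 - q 2^3 - q 4^3 - q 5^3| = 120 := by rw [hA, abs_mul, hs]; norm_num
    obtain ⟨h1, h2, h3, h4, h5, h6⟩ := block (q 0) (q 1) (q 2) (q 4) (q 5) (q 3)
      (hodd 0) (hodd 1) (hodd 2) (hodd 4) (hodd 5)
      (hpp 0 1 (by decide) (by decide) (by decide)) (hpp 0 2 (by decide) (by decide) (by decide)) (hpp 0 4 (by decide) (by decide) (by decide)) (hpp 0 5 (by decide) (by decide) (by decide)) (hpp 1 2 (by decide) (by decide) (by decide))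
      (hpp 1 4 (by decide) (by decide) (by decide)) (hpp 1 5 (by decide) (by decide) (by decide)) (hpp 2 4 (by decide) (by decide) (by decide)) (hpp 2 5 (by decide) (by decide) (by decide)) (hpp 4 5 (by decide) (by decide) (by decide))
      (by linarith) habs
    exact master q 3 1 (Or.inl rfl) (by intro j hj; fin_cases j <;> simp_all <;> linarith) (by simp_all <;> linarith)
  · -- i₀ = 4, pos
    have hA : (q 0 + q 1 + q 2 + q 3 + q 5)^3 - q 0^3 - q 1^3 - q 2^3 - q 3^3 - q 5^3 = -3 * esymm 3 q := by
      linear_combination (-1) * hp3 + ((q 0 + q 1 + q 2 + q 3 + q 5)^2 - (q 0 + q 1 + q 2 + q 3 + q 5) * q 4 + (q 4)^2) * hsum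
    have habs : |(q 0 + q 1 + q 2 + q 3 + q 5)^3 - q 0^3 - q 1^3 - q 2^3 - q 3^3 - q 5^3| = 120 := by rw [hA, abs_mul, hs]; norm_num
    obtain ⟨h1, h2, h3, h4, h5, h6⟩ := block (q 0) (q 1) (q 2) (q 3) (q 5) (q 4)
      (hodd 0) (hodd 1) (hodd 2) (hodd 3) (hodd 5)
      (hpp 0 1 (by decide) (by decide) (by decide)) (hpp 0 2 (by decide) (by decide) (by decide)) (hpp 0 3 (by decide) (by decide) (by decide)) (hpp 0 5 (by decide) (by decide) (by decide)) (hpp 1 2 (by decide) (by decide) (by decide))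
      (hpp 1 3 (by decide) (by decide) (by decide)) (hpp 1 5 (by decide) (by decide) (by decide)) (hpp 2 3 (by decide) (by decide) (by decide)) (hpp 2 5 (by decide) (by decide) (by decide)) (hpp 3 5 (by decide) (by decide) (by decide))
      (by linarith) habs
    exact master q 4 1 (Or.inl rfl) (by intro j hj; fin_cases j <;> simp_all <;> linarith) (by simp_all <;> linarith)
  · -- i₀ = 5, pos
    have hA : (q 0 + q 1 + q 2 + q 3 + q 4)^3 - q 0^3 - q 1^3 - q 2^3 - q 3^3 - q 4^3 = -3 * esymm 3 q := by
      linear_combination (-1) * hp3 + ((q 0 + q 1 + q 2 + q 3 + q 4)^2 - (q 0 + q 1 + q 2 + q 3 + q 4) * q 5 + (q 5)^2) * hsum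
    have habs : |(q 0 + q 1 + q 2 + q 3 + q 4)^3 - q 0^3 - q 1^3 - q 2^3 - q 3^3 - q 4^3| = 120 := by rw [hA, abs_mul, hs]; norm_num
    obtain ⟨h1, h2, h3, h4, h5, h6⟩ := block (q 0) (q 1) (q 2) (q 3) (q 4) (q 5)
      (hodd 0) (hodd 1) (hodd 2) (hodd 3) (hodd 4)
      (hpp 0 1 (by decide) (by decide) (by decide)) (hpp 0 2 (by decide) (by decide) (by decide)) (hpp 0 3 (by decide) (by decide) (by decide)) (hpp 0 4 (by decide) (by decide) (by decide)) (hpp 1 2 (by decide) (by decide) (by decide))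
      (hpp 1 3 (by decide) (by decide) (by decide)) (hpp 1 4 (by decide) (by decide) (by decide)) (hpp 2 3 (by decide) (by decide) (by decide)) (hpp 2 4 (by decide) (by decide) (by decide)) (hpp 3 4 (by decide) (by decide) (by decide))
      (by linarith) habs
    exact master q 5 1 (Or.inl rfl) (by intro j hj; fin_cases j <;> simp_all <;> linarith) (by simp_all <;> linarith)
  · -- i₀ = 0, neg
    have hA : ((-q 1) + (-q 2) + (-q 3) + (-q 4) + (-q 5))^3 - (-q 1)^3 - (-q 2)^3 - (-q 3)^3 - (-q 4)^3 - (-q 5)^3 = 3 * esymm 3 q := by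
      linear_combination hp3 - ((q 1 + q 2 + q 3 + q 4 + q 5)^2 - (q 1 + q 2 + q 3 + q 4 + q 5) * q 0 + (q 0)^2) * hsum
    have habs : |((-q 1) + (-q 2) + (-q 3) + (-q 4) + (-q 5))^3 - (-q 1)^3 - (-q 2)^3 - (-q 3)^3 - (-q 4)^3 - (-q 5)^3| = 120 := by rw [hA, abs_mul, hs]; norm_num
    obtain ⟨h1, h2, h3, h4, h5, h6⟩ := block (-q 1) (-q 2) (-q 3) (-q 4) (-q 5) (-q 0)
      ((hodd 1).neg) ((hodd 2).neg) ((hodd 3).neg) ((hodd 4).neg) ((hodd 5).neg)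
      (by have := hpp 1 2 (by decide) (by decide) (by decide); linarith) (by have := hpp 1 3 (by decide) (by decide) (by decide); linarith) (by have := hpp 1 4 (by decide) (by decide) (by decide); linarith) (by have := hpp 1 5 (by decide) (by decide) (by decide); linarith) (by have := hpp 2 3 (by decide) (by decide) (by decide); linarith)
      (by have := hpp 2 4 (by decide) (by decide) (by decide); linarith) (by have := hpp 2 5 (by decide) (by decide) (by decide); linarith) (by have := hpp 3 4 (by decide) (by decide) (by decide); linarith) (by have := hpp 3 5 (by decide) (by decide) (by decide); linarith) (by have := hpp 4 5 (by decide) (by decide) (by decide); linarith)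
      (by linarith) habs
    exact master q 0 (-1) (Or.inr rfl) (by intro j hj; fin_cases j <;> simp_all <;> linarith) (by simp_all <;> linarith)
  · -- i₀ = 1, neg
    have hA : ((-q 0) + (-q 2) + (-q 3) + (-q 4) + (-q 5))^3 - (-q 0)^3 - (-q 2)^3 - (-q 3)^3 - (-q 4)^3 - (-q 5)^3 = 3 * esymm 3 q := by
      linear_combination hp3 - ((q 0 + q 2 + q 3 + q 4 + q 5)^2 - (q 0 + q 2 + q 3 + q 4 + q 5) * q 1 + (q 1)^2) * hsum
    have habs : |((-q 0) + (-q 2) + (-q 3) + (-q 4) + (-q 5))^3 - (-q 0)^3 - (-q 2)^3 - (-q 3)^3 - (-q 4)^3 - (-q 5)^3| = 120 := by rw [hA, abs_mul, hs]; norm_num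
    obtain ⟨h1, h2, h3, h4, h5, h6⟩ := block (-q 0) (-q 2) (-q 3) (-q 4) (-q 5) (-q 1)
      ((hodd 0).neg) ((hodd 2).neg) ((hodd 3).neg) ((hodd 4).neg) ((hodd 5).neg)
      (by have := hpp 0 2 (by decide) (by decide) (by decide); linarith) (by have := hpp 0 3 (by decide) (by decide) (by decide); linarith) (by have := hpp 0 4 (by decide) (by decide) (by decide); linarith) (by have := hpp 0 5 (by decide) (by decide) (by decide); linarith) (by have := hpp 2 3 (by decide) (by decide) (by decide); linarith)
      (by have := hpp 2 4 (by decide) (by decide) (by decide); linarith) (by have := hpp 2 5 (by decide) (by decide) (by decide); linarith) (by have := hpp 3 4 (by decide) (by decide) (by decide); linarith) (by have := hpp 3 5 (by decide) (by decide) (by decide); linarith) (by have := hpp 4 5 (by decide) (by decide) (by decide); linarith)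
      (by linarith) habs
    exact master q 1 (-1) (Or.inr rfl) (by intro j hj; fin_cases j <;> simp_all <;> linarith) (by simp_all <;> linarith)
  · -- i₀ = 2, neg
    have hA : ((-q 0) + (-q 1) + (-q 3) + (-q 4) + (-q 5))^3 - (-q 0)^3 - (-q 1)^3 - (-q 3)^3 - (-q 4)^3 - (-q 5)^3 = 3 * esymm 3 q := by
      linear_combination hp3 - ((q 0 + q 1 + q 3 + q 4 + q 5)^2 - (q 0 + q 1 + q 3 + q 4 + q 5) * q 2 + (q 2)^2) * hsum
    have habs : |((-q 0) + (-q 1) + (-q 3) + (-q 4) + (-q 5))^3 - (-q 0)^3 - (-q 1)^3 - (-q 3)^3 - (-q 4)^3 - (-q 5)^3| = 120 := by rw [hA, abs_mul, hs]; norm_num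
    obtain ⟨h1, h2, h3, h4, h5, h6⟩ := block (-q 0) (-q 1) (-q 3) (-q 4) (-q 5) (-q 2)
      ((hodd 0).neg) ((hodd 1).neg) ((hodd 3).neg) ((hodd 4).neg) ((hodd 5).neg)
      (by have := hpp 0 1 (by decide) (by decide) (by decide); linarith) (by have := hpp 0 3 (by decide) (by decide) (by decide); linarith) (by have := hpp 0 4 (by decide) (by decide) (by decide); linarith) (by have := hpp 0 5 (by decide) (by decide) (by decide); linarith) (by have := hpp 1 3 (by decide) (by decide) (by decide); linarith)
      (by have := hpp 1 4 (by decide) (by decide) (by decide); linarith) (by have := hpp 1 5 (by decide) (by decide) (by decide); linarith) (by have := hpp 3 4 (by decide) (by decide) (by decide); linarith) (by have := hpp 3 5 (by decide) (by decide) (by decide); linarith) (by have := hpp 4 5 (by decide) (by decide) (by decide); linarith)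
      (by linarith) habs
    exact master q 2 (-1) (Or.inr rfl) (by intro j hj; fin_cases j <;> simp_all <;> linarith) (by simp_all <;> linarith)
  · -- i₀ = 3, neg
    have hA : ((-q 0) + (-q 1) + (-q 2) + (-q 4) + (-q 5))^3 - (-q 0)^3 - (-q 1)^3 - (-q 2)^3 - (-q 4)^3 - (-q 5)^3 = 3 * esymm 3 q := by
      linear_combination hp3 - ((q 0 + q 1 + q 2 + q 4 + q 5)^2 - (q 0 + q 1 + q 2 + q 4 + q 5) * q 3 + (q 3)^2) * hsum
    have habs : |((-q 0) + (-q 1) + (-q 2) + (-q 4) + (-q 5))^3 - (-q 0)^3 - (-q 1)^3 - (-q 2)^3 - (-q 4)^3 - (-q 5)^3| = 120 := by rw [hA, abs_mul, hs]; norm_num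
    obtain ⟨h1, h2, h3, h4, h5, h6⟩ := block (-q 0) (-q 1) (-q 2) (-q 4) (-q 5) (-q 3)
      ((hodd 0).neg) ((hodd 1).neg) ((hodd 2).neg) ((hodd 4).neg) ((hodd 5).neg)
      (by have := hpp 0 1 (by decide) (by decide) (by decide); linarith) (by have := hpp 0 2 (by decide) (by decide) (by decide); linarith) (by have := hpp 0 4 (by decide) (by decide) (by decide); linarith) (by have := hpp 0 5 (by decide) (by decide) (by decide); linarith) (by have := hpp 1 2 (by decide) (by decide) (by decide); linarith)
      (by have := hpp 1 4 (by decide) (by decide) (by decide); linarith) (by have := hpp 1 5 (by decide) (by decide) (by decide); linarith) (by have := hpp 2 4 (by decide) (by decide) (by decide); linarith) (by have := hpp 2 5 (by decide) (by decide) (by decide); linarith) (by have := hpp 4 5 (by decide) (by decide) (by decide); linarith)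
      (by linarith) habs
    exact master q 3 (-1) (Or.inr rfl) (by intro j hj; fin_cases j <;> simp_all <;> linarith) (by simp_all <;> linarith)
  · -- i₀ = 4, neg
    have hA : ((-q 0) + (-q 1) + (-q 2) + (-q 3) + (-q 5))^3 - (-q 0)^3 - (-q 1)^3 - (-q 2)^3 - (-q 3)^3 - (-q 5)^3 = 3 * esymm 3 q := by
      linear_combination hp3 - ((q 0 + q 1 + q 2 + q 3 + q 5)^2 - (q 0 + q 1 + q 2 + q 3 + q 5) * q 4 + (q 4)^2) * hsum
    have habs : |((-q 0) + (-q 1) + (-q 2) + (-q 3) + (-q 5))^3 - (-q 0)^3 - (-q 1)^3 - (-q 2)^3 - (-q 3)^3 - (-q 5)^3| = 120 := by rw [hA, abs_mul, hs]; norm_num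
    obtain ⟨h1, h2, h3, h4, h5, h6⟩ := block (-q 0) (-q 1) (-q 2) (-q 3) (-q 5) (-q 4)
      ((hodd 0).neg) ((hodd 1).neg) ((hodd 2).neg) ((hodd 3).neg) ((hodd 5).neg)
      (by have := hpp 0 1 (by decide) (by decide) (by decide); linarith) (by have := hpp 0 2 (by decide) (by decide) (by decide); linarith) (by have := hpp 0 3 (by decide) (by decide) (by decide); linarith) (by have := hpp 0 5 (by decide) (by decide) (by decide); linarith) (by have := hpp 1 2 (by decide) (by decide) (by decide); linarith)
      (by have := hpp 1 3 (by decide) (by decide) (by decide); linarith) (by have := hpp 1 5 (by decide) (by decide) (by decide); linarith) (by have := hpp 2 3 (by decide) (by decide) (by decide); linarith) (by have := hpp 2 5 (by decide) (by decide) (by decide); linarith) (by have := hpp 3 5 (by decide) (by decide) (by decide); linarith)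
      (by linarith) habs
    exact master q 4 (-1) (Or.inr rfl) (by intro j hj; fin_cases j <;> simp_all <;> linarith) (by simp_all <;> linarith)
  · -- i₀ = 5, neg
    have hA : ((-q 0) + (-q 1) + (-q 2) + (-q 3) + (-q 4))^3 - (-q 0)^3 - (-q 1)^3 - (-q 2)^3 - (-q 3)^3 - (-q 4)^3 = 3 * esymm 3 q := by
      linear_combination hp3 - ((q 0 + q 1 + q 2 + q 3 + q 4)^2 - (q 0 + q 1 + q 2 + q 3 + q 4) * q 5 + (q 5)^2) * hsum
    have habs : |((-q 0) + (-q 1) + (-q 2) + (-q 3) + (-q 4))^3 - (-q 0)^3 - (-q 1)^3 - (-q 2)^3 - (-q 3)^3 - (-q 4)^3| = 120 := by rw [hA, abs_mul, hs]; norm_num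
    obtain ⟨h1, h2, h3, h4, h5, h6⟩ := block (-q 0) (-q 1) (-q 2) (-q 3) (-q 4) (-q 5)
      ((hodd 0).neg) ((hodd 1).neg) ((hodd 2).neg) ((hodd 3).neg) ((hodd 4).neg)
      (by have := hpp 0 1 (by decide) (by decide) (by decide); linarith) (by have := hpp 0 2 (by decide) (by decide) (by decide); linarith) (by have := hpp 0 3 (by decide) (by decide) (by decide); linarith) (by have := hpp 0 4 (by decide) (by decide) (by decide); linarith) (by have := hpp 1 2 (by decide) (by decide) (by decide); linarith)
      (by have := hpp 1 3 (by decide) (by decide) (by decide); linarith) (by have := hpp 1 4 (by decide) (by decide) (by decide); linarith) (by have := hpp 2 3 (by decide) (by decide) (by decide); linarith) (by have := hpp 2 4 (by decide) (by decide) (by decide); linarith) (by have := hpp 3 4 (by decide) (by decide) (by decide); linarith)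
      (by linarith) habs
    exact master q 5 (-1) (Or.inr rfl) (by intro j hj; fin_cases j <;> simp_all <;> linarith) (by simp_all <;> linarith)
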